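/- arXiv:2210.14302 — 2 statements merged into one kernel-verified Lean document; each statement's English description precedes it below -/
import Mathlib

section
/- The set of all possible compromises of the two-level example equals the union of two segments: N̂ = N₁ ∩ N₂ = H((6,6),(3,6)) ∪ H((3,6),(1,5)), where H(·,·) denotes the convex hull (segment) of two points. -/
/-- The feasible region of the numerical two-level example. -/
def S : Set (ℝ × ℝ) :=
  {x : ℝ × ℝ | -2 * x.1 + x.2 ≤ 3 ∧ -x.1 + 2 * x.2 ≤ 9 ∧ x.2 ≤ 6 ∧ x.1 ≤ 6 ∧
    -x.1 - 2 * x.2 ≤ -9 ∧ 3 * x.1 - 4 * x.2 ≤ 7 ∧ x.1 - 2 * x.2 ≤ 2 ∧ 0 ≤ x.1 ∧ 0 ≤ x.2}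

/-- The level-1 objective map. -/
noncomputable def F1 (x : ℝ × ℝ) : ℝ × ℝ × ℝ :=
  (2 * x.1 + 2 * x.2, -(1/2) * x.1 + (7/25) * x.2, -(1/5) * x.1 + (1/2) * x.2)

/-- The level-2 objective map. -/
noncomputable def F2 (x : ℝ × ℝ) : ℝ × ℝ × ℝ :=
  (x.1 + 3 * x.2, -2 * x.1 - x.2, x.2)

/-- The set of points of `S` which are non-dominated for level 1 on `S`. -/
def N1 : Set (ℝ × ℝ) :=
  {x ∈ S | ¬ ∃ y ∈ S, F1 x ≤ F1 y ∧ F1 y ≠ F1 x}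

/-- The set of points of `S` which are non-dominated for level 2 on `S`. -/
def N2 : Set (ℝ × ℝ) :=
  {x ∈ S | ¬ ∃ y ∈ S, F2 x ≤ F2 y ∧ F2 y ≠ F2 x}

/-- If three coordinates weakly dominate and the triples differ, one is strict. -/
lemma strict_of_ne {a1 a2 a3 b1 b2 b3 : ℝ} (h1 : a1 ≤ b1) (h2 : a2 ≤ b2) (h3 : a3 ≤ b3)
    (hne : ((b1, b2, b3) : ℝ × ℝ × ℝ) ≠ (a1, a2, a3)) : a1 < b1 ∨ a2 < b2 ∨ a3 < b3 := by
  by_contra h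
  push_neg at h
  exact hne (by
    simp only [Prod.mk.injEq]
    exact ⟨le_antisymm h.1 h1, le_antisymm h.2.1 h2, le_antisymm h.2.2 h3⟩)

lemma seg1_in_N1 (a b : ℝ) (hb : b = 6) (h3 : 3 ≤ a) (h6 : a ≤ 6) : (a, b) ∈ N1 := by
  subst hb
  simp only [N1, Set.mem_setOf_eq, S]
  constructor
  · exact ⟨by linarith, by linarith, le_refl _, h6, by linarith,
      by linarith, by linarith, by linarith, by norm_num⟩
  · rintro ⟨y, hyS, hle, hne⟩
    obtain ⟨d1, d2, d3, d4, d5, d6, d7, d8, d9⟩ := hyS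
    simp only [F1, Prod.mk_le_mk] at hle
    simp only [F1] at hne
    obtain ⟨h1, h2, h3'⟩ := hle
    rcases strict_of_ne h1 h2 h3' hne with l | l | l <;> linarith

lemma seg1_in_N2 (a b : ℝ) (hb : b = 6) (h3 : 3 ≤ a) (h6 : a ≤ 6) : (a, b) ∈ N2 := by
  subst hb
  simp only [N2, Set.mem_setOf_eq, S]
  constructor
  · exact ⟨by linarith, by linarith, le_refl _, h6, by linarith,
      by linarith, by linarith, by linarith, by norm_num⟩
  · rintro ⟨y, hyS, hle, hne⟩
    obtain ⟨d1, d2, d3, d4, d5, d6, d7, d8, d9⟩ := hyS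
    simp only [F2, Prod.mk_le_mk] at hle
    simp only [F2] at hne
    obtain ⟨h1, h2, h3'⟩ := hle
    rcases strict_of_ne h1 h2 h3' hne with l | l | l <;> linarith

lemma seg2_in_N1 (a b : ℝ) (hline : -a + 2 * b = 9) (h1a : 1 ≤ a) (h3a : a ≤ 3) :
    (a, b) ∈ N1 := by
  simp only [N1, Set.mem_setOf_eq, S]
  constructor
  · exact ⟨by linarith, by linarith, by linarith, by linarith, by linarith,
      by linarith, by linarith, by linarith, by linarith⟩
  · rintro ⟨y, hyS, hle, hne⟩
    obtain ⟨d1, d2, d3, d4, d5, d6, d7, d8, d9⟩ := hyS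
    simp only [F1, Prod.mk_le_mk] at hle
    simp only [F1] at hne
    obtain ⟨h1, h2, h3'⟩ := hle
    rcases strict_of_ne h1 h2 h3' hne with l | l | l <;> linarith

lemma seg2_in_N2 (a b : ℝ) (hline : -a + 2 * b = 9) (h1a : 1 ≤ a) (h3a : a ≤ 3) :
    (a, b) ∈ N2 := by
  simp only [N2, Set.mem_setOf_eq, S]
  constructor
  · exact ⟨by linarith, by linarith, by linarith, by linarith, by linarith,
      by linarith, by linarith, by linarith, by linarith⟩
  · rintro ⟨y, hyS, hle, hne⟩
    obtain ⟨d1, d2, d3, d4, d5, d6, d7, d8, d9⟩ := hyS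
    simp only [F2, Prod.mk_le_mk] at hle
    simp only [F2] at hne
    obtain ⟨h1, h2, h3'⟩ := hle
    rcases strict_of_ne h1 h2 h3' hne with l | l | l <;> linarith

/-- The set of all possible compromises of the two-level example equals the union of
the two segments `H((6,6),(3,6))` and `H((3,6),(1,5))`. -/
theorem compromises_eq_union_of_segments :
    N1 ∩ N2 =
      convexHull ℝ {((6, 6) : ℝ × ℝ), ((3, 6) : ℝ × ℝ)} ∪
        convexHull ℝ {((3, 6) : ℝ × ℝ), ((1, 5) : ℝ × ℝ)} := by
  ext x
  obtain ⟨a, b⟩ := x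
  simp only [Set.mem_inter_iff, Set.mem_union, convexHull_pair]
  constructor
  · rintro ⟨hx1, -⟩
    simp only [N1, Set.mem_setOf_eq, S] at hx1
    obtain ⟨⟨c1, c2, c3, c4, c5, c6, c7, c8, c9⟩, hnd⟩ := hx1
    rcases le_or_gt 3 a with h3 | h3
    · -- a ≥ 3 : necessarily b = 6, on the first segment
      have hb : b = 6 := by
        by_contra hb
        have hb' : b < 6 := lt_of_le_of_ne c3 hb
        refine hnd ⟨(a, 6), ⟨show -2 * a + 6 ≤ (3:ℝ) by linarith,
          show -a + 2 * 6 ≤ (9:ℝ) by linarith, show (6:ℝ) ≤ 6 from le_refl _, c4,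
          show -a - 2 * 6 ≤ (-9:ℝ) by linarith, show 3 * a - 4 * 6 ≤ (7:ℝ) by linarith,
          show a - 2 * 6 ≤ (2:ℝ) by linarith, c8, show (0:ℝ) ≤ 6 by norm_num⟩, ?_, ?_⟩
        · simp only [F1, Prod.mk_le_mk]
          exact ⟨by linarith, by linarith, by linarith⟩
        · intro h
          have h1 : (F1 (a, 6)).1 = (F1 (a, b)).1 := by rw [h]
          simp only [F1] at h1
          linarith
      left
      exact ⟨(a - 3) / 3, (6 - a) / 3, by linarith, by linarith, by ring,
        by simp [Prod.ext_iff]; constructor <;> linarith⟩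
    · rcases eq_or_lt_of_le c2 with hline | hlt
      · -- on the line -x+2y = 9, hence on the second segment
        right
        have h1a : 1 ≤ a := by linarith
        exact ⟨(a - 1) / 2, (3 - a) / 2, by linarith, by linarith, by ring,
          by simp [Prod.ext_iff]; constructor <;> linarith⟩
      · exfalso
        rcases le_or_gt (-9) (25 * a - 14 * b) with hq | hq
        · -- dominated by (3,6)
          refine hnd ⟨(3, 6), ⟨show -2 * 3 + 6 ≤ (3:ℝ) by norm_num,
            show -3 + 2 * 6 ≤ (9:ℝ) by norm_num, show (6:ℝ) ≤ 6 from le_refl _,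
            show (3:ℝ) ≤ 6 by norm_num, show -3 - 2 * 6 ≤ (-9:ℝ) by norm_num,
            show 3 * 3 - 4 * 6 ≤ (7:ℝ) by norm_num, show 3 - 2 * 6 ≤ (2:ℝ) by norm_num,
            show (0:ℝ) ≤ 3 by norm_num, show (0:ℝ) ≤ 6 by norm_num⟩, ?_, ?_⟩
          · simp only [F1, Prod.mk_le_mk]
            exact ⟨by linarith, by linarith, by linarith⟩
          · intro h
            have h1 : (F1 ((3:ℝ), (6:ℝ))).1 = (F1 (a, b)).1 := by rw [h]
            simp only [F1] at h1
            linarith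
        · -- dominated by x + t • (14, 25) with t = (9 + a - 2b)/36
          have ht : 0 < (9 + a - 2 * b) / 36 := by linarith
          set t : ℝ := (9 + a - 2 * b) / 36 with htdef
          refine hnd ⟨(a + 14 * t, b + 25 * t),
            ⟨show -2 * (a + 14 * t) + (b + 25 * t) ≤ 3 by rw [htdef]; linarith,
             show -(a + 14 * t) + 2 * (b + 25 * t) ≤ 9 by rw [htdef]; linarith,
             show b + 25 * t ≤ 6 by rw [htdef]; linarith,
             show a + 14 * t ≤ 6 by rw [htdef]; linarith,
             show -(a + 14 * t) - 2 * (b + 25 * t) ≤ -9 by rw [htdef]; linarith,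
             show 3 * (a + 14 * t) - 4 * (b + 25 * t) ≤ 7 by rw [htdef]; linarith,
             show (a + 14 * t) - 2 * (b + 25 * t) ≤ 2 by rw [htdef]; linarith,
             show 0 ≤ a + 14 * t by rw [htdef]; linarith,
             show 0 ≤ b + 25 * t by rw [htdef]; linarith⟩, ?_, ?_⟩
          · simp only [F1, Prod.mk_le_mk]
            exact ⟨by linarith, by linarith, by linarith⟩
          · intro h
            have h1 : (F1 (a + 14 * t, b + 25 * t)).1 = (F1 (a, b)).1 := by rw [h]
            simp only [F1] at h1
            rw [htdef] at h1
            linarith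
  · rintro (⟨u, v, hu, hv, huv, heq⟩ | ⟨u, v, hu, hv, huv, heq⟩)
    · have e1 := congrArg Prod.fst heq
      have e2 := congrArg Prod.snd heq
      simp at e1 e2
      have hb : b = 6 := by linarith
      have h3 : 3 ≤ a := by nlinarith
      have h6 : a ≤ 6 := by nlinarith
      exact ⟨seg1_in_N1 a b hb h3 h6, seg1_in_N2 a b hb h3 h6⟩
    · have e1 := congrArg Prod.fst heq
      have e2 := congrArg Prod.snd heq
      simp at e1 e2
      have hline : -a + 2 * b = 9 := by linarith
      have h1a : 1 ≤ a := by nlinarith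
      have h3a : a ≤ 3 := by nlinarith
      exact ⟨seg2_in_N1 a b hline h1a h3a, seg2_in_N2 a b hline h1a h3a⟩
end

section
/- The point (2, 11/2) is a non-dominated solution of the level-1 multiobjective problem with bounded variables: it belongs to S₁ = {x ∈ S : 1 ≤ x₁ ≤ 3, 5 ≤ x₂ ≤ 6}, and there is no y ∈ S₁ with F₁(y) ≥ F₁((2,11/2)) componentwise and F₁(y) ≠ F₁((2,11/2)). -/
/-- The feasible set of the level-1 problem with bounded variables. -/
def S1 : Set (ℝ × ℝ) := {x ∈ S | 1 ≤ x.1 ∧ x.1 ≤ 3 ∧ 5 ≤ x.2 ∧ x.2 ≤ 6}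

/-- The point `(2, 11/2)` is a non-dominated solution of the level-1 multiobjective
problem with bounded variables over `S₁`. -/
theorem two_eleven_halves_nondominated_level1 :
    ((2, 11/2) : ℝ × ℝ) ∈ S1 ∧
      ¬ ∃ y ∈ S1, F1 ((2, 11/2) : ℝ × ℝ) ≤ F1 y ∧ F1 y ≠ F1 ((2, 11/2) : ℝ × ℝ) := by
  constructor
  · refine ⟨⟨?_, ?_, ?_, ?_, ?_, ?_, ?_, ?_, ?_⟩, ?_, ?_, ?_, ?_⟩ <;> norm_num
  · rintro ⟨y, ⟨⟨hS1, hS2, hS3, hS4, hS5, hS6, hS7, hS8, hS9⟩, hb1, hb2, hb3, hb4⟩, hle, hne⟩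
    simp only [F1, Prod.mk_le_mk] at hle
    obtain ⟨h1, h2, h3⟩ := hle
    norm_num at h1 h2 h3
    have hy1 : y.1 = 2 := by linarith
    have hy2 : y.2 = 11/2 := by linarith
    apply hne
    simp [F1, hy1, hy2]
end
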